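/- For fixed x ∈ ℂ \ ℝ₊, the functions e_c^{(h)+}(x) := h^c · Γ(1 + c - x/h)/Γ(1 - x/h) converge to (-x)^c as h → 0⁺, where (-x)^c uses the principal branch, uniformly for c in closed disks. -/

import Mathlib

open Filter Topology

section aux
open Complex

lemma aux_normsq (z : ℂ) : ‖z‖^2 = z.re^2 + z.im^2 := by
  rw [Complex.sq_norm, Complex.normSq_apply]; ring

-- geometry lemma
lemma aux_lower (u : ℂ) (hu : u ∈ Complex.slitPlane) :
    ∃ δ : ℝ, 0 < δ ∧ δ ≤ 1 ∧ ∀ t : ℝ, 0 < t → ∀ m : ℝ, 0 ≤ m →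
      δ * (t * ‖u‖ + m) ≤ ‖(t : ℂ) * u + (m : ℂ)‖ := by
  have hu0 : u ≠ 0 := Complex.slitPlane_ne_zero hu
  have hnu : 0 < ‖u‖ := norm_pos_iff.mpr hu0
  set ρ : ℝ := u.re / ‖u‖ with hρdef
  have hρ1 : ρ ≤ 1 := by
    rw [hρdef, div_le_one hnu]
    exact le_trans (le_abs_self _) (by exact Complex.abs_re_le_norm u)
  have hρm1 : -1 < ρ := by
    rw [hρdef, lt_div_iff₀ hnu]
    rcases hu with h | h
    · nlinarith
    · have h2 : u.re ^ 2 < ‖u‖ ^ 2 := by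
        rw [aux_normsq]
        nlinarith [sq_nonneg u.im, pow_pos (abs_pos.mpr h) 2, _root_.sq_abs u.im]
      nlinarith [abs_nonneg u.re, sq_nonneg (u.re + ‖u‖)]
  refine ⟨Real.sqrt ((1 + ρ)/2), Real.sqrt_pos.mpr (by linarith), ?_, ?_⟩
  · exact Real.sqrt_le_one.mpr (by linarith)
  · intro t ht m hm
    set δ := Real.sqrt ((1 + ρ)/2) with hδ
    have hδsq : δ^2 = (1+ρ)/2 := Real.sq_sqrt (by linarith)
    have hδnn : 0 ≤ δ := Real.sqrt_nonneg _
    have key : (δ * (t * ‖u‖ + m))^2 ≤ ‖(t : ℂ) * u + (m : ℂ)‖^2 := by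
      have hre : ((t : ℂ) * u + (m : ℂ)).re = t * u.re + m := by simp
      have him : ((t : ℂ) * u + (m : ℂ)).im = t * u.im := by simp
      rw [aux_normsq, hre, him]
      have hnormsq := aux_normsq u
      have hreρ : u.re = ρ * ‖u‖ := by rw [hρdef, div_mul_cancel₀ _ hnu.ne']
      have h3 : (t*u.im)^2 = t^2*‖u‖^2 - t^2*(ρ*‖u‖)^2 := by
        rw [← hreρ]; nlinarith [hnormsq]
      have h1 : (δ * (t * ‖u‖ + m))^2 = (1+ρ)/2 * (t*‖u‖ + m)^2 := by
        rw [mul_pow, hδsq]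
      rw [h1, hreρ, h3]
      nlinarith [sq_nonneg (t*‖u‖ - m), mul_pos ht hnu, mul_nonneg (mul_pos ht hnu).le hm]
    have h2 : 0 ≤ δ * (t * ‖u‖ + m) := by positivity
    nlinarith [norm_nonneg ((t : ℂ) * u + (m : ℂ))]


-- Mean value estimates for log along the segment [a, a+1]
lemma aux_log_seg (a : ℂ) (m : ℝ) (hm : 0 < m)
    (hseg : ∀ t : ℝ, t ∈ Set.Icc (0:ℝ) 1 → (a + (t:ℂ)) ∈ Complex.slitPlane ∧ m ≤ ‖a + (t:ℂ)‖) :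
    ‖Complex.log (a+1) - Complex.log a - a⁻¹‖ ≤ 1/(m * ‖a‖) ∧
      ‖Complex.log (a+1) - Complex.log a‖ ≤ 1/m := by
  have ha0 : a ≠ 0 := by
    have := (hseg 0 (by norm_num)).2
    simp only [Complex.ofReal_zero, add_zero] at this
    intro h; rw [h] at this; simp at this; linarith
  have hna : 0 < ‖a‖ := norm_pos_iff.mpr ha0
  set s : Set ℂ := (fun t : ℝ => a + (t:ℂ)) '' Set.Icc 0 1 with hs
  have hconv : Convex ℝ s := by
    have : s = segment ℝ a (a+1) := by
      rw [segment_eq_image']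
      ext z; simp only [hs, Set.mem_image]
      constructor
      · rintro ⟨t, ht, rfl⟩; exact ⟨t, ht, by push_cast [Complex.real_smul]; ring⟩
      · rintro ⟨t, ht, rfl⟩; exact ⟨t, ht, by push_cast [Complex.real_smul]; ring⟩
    rw [this]; exact convex_segment _ _
  have hmem0 : a ∈ s := ⟨0, by norm_num, by norm_num⟩
  have hmem1 : a + 1 ∈ s := ⟨1, by norm_num, by norm_num⟩
  have hz : ∀ z ∈ s, z ∈ Complex.slitPlane ∧ m ≤ ‖z‖ := by
    rintro z ⟨t, ht, rfl⟩; exact hseg t ht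
  constructor
  · have hd : ∀ z ∈ s, HasDerivWithinAt (fun z => Complex.log z - z * a⁻¹) (z⁻¹ - a⁻¹) s z := by
      intro z hzs
      exact ((Complex.hasDerivAt_log (hz z hzs).1).sub (hasDerivAt_mul_const a⁻¹)).hasDerivWithinAt
    have hb : ∀ z ∈ s, ‖z⁻¹ - a⁻¹‖ ≤ 1/(m * ‖a‖) := by
      rintro z ⟨t, ht, rfl⟩
      have hzn := (hseg t ht).2
      have hzne' : a + (t:ℂ) ≠ 0 := by
        intro h; rw [h] at hzn; simp at hzn; linarith
      rw [inv_sub_inv hzne' ha0, norm_div, norm_mul]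
      have heq : ‖a - (a + (t:ℂ))‖ = |t| := by
        rw [show a - (a + (t:ℂ)) = -(t:ℂ) by ring, norm_neg, Complex.norm_real, Real.norm_eq_abs]
      have h0 : 0 < ‖a + (t:ℂ)‖ := lt_of_lt_of_le hm hzn
      rw [heq, _root_.abs_of_nonneg ht.1, div_le_div_iff₀ (mul_pos h0 hna) (by positivity)]
      calc t * (m * ‖a‖) ≤ 1 * (m * ‖a‖) := by
            apply mul_le_mul_of_nonneg_right ht.2; positivity
        _ ≤ ‖a + (t:ℂ)‖ * ‖a‖ := by
            rw [one_mul]; exact mul_le_mul_of_nonneg_right hzn hna.le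
        _ = 1 * (‖a + (t:ℂ)‖ * ‖a‖) := by ring
    have key := hconv.norm_image_sub_le_of_norm_hasDerivWithin_le hd hb hmem0 hmem1
    simp only [add_sub_cancel_left, norm_one, mul_one] at key
    have heq2 : (Complex.log (a+1) - (a+1) * a⁻¹) - (Complex.log a - a * a⁻¹)
        = Complex.log (a+1) - Complex.log a - a⁻¹ := by
      rw [add_mul, mul_inv_cancel₀ ha0]; ring
    rwa [heq2] at key
  · have hd : ∀ z ∈ s, HasDerivWithinAt Complex.log z⁻¹ s z := fun z hzs =>
      (Complex.hasDerivAt_log (hz z hzs).1).hasDerivWithinAt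
    have hb : ∀ z ∈ s, ‖z⁻¹‖ ≤ 1/m := by
      intro z hzs
      rw [norm_inv, one_div]
      exact inv_anti₀ hm (hz z hzs).2
    have key := hconv.norm_image_sub_le_of_norm_hasDerivWithin_le hd hb hmem0 hmem1
    simpa using key

-- sum bound
lemma aux_sum_bound (τ : ℝ) (hτ : 0 < τ) (n : ℕ) :
    ∑ k ∈ Finset.range n, 1/(τ + k + 1)^2 ≤ 1/τ := by
  have h1 : ∀ k ∈ Finset.range n, 1/(τ + k + 1)^2 ≤ 1/(τ+k) - 1/(τ+k+1) := by
    intro k _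
    have h2 : (0:ℝ) < τ + k := by positivity
    have h3 : (0:ℝ) < τ + k + 1 := by positivity
    rw [div_sub_div _ _ h2.ne' h3.ne', div_le_div_iff₀ (by positivity) (by positivity)]
    ring_nf
    nlinarith
  calc ∑ k ∈ Finset.range n, 1/(τ + k + 1)^2
      ≤ ∑ k ∈ Finset.range n, (1/(τ+k) - 1/(τ+k+1)) := Finset.sum_le_sum h1
    _ = 1/(τ + ((0:ℕ):ℝ)) - 1/(τ + n) := by
        have := Finset.sum_range_sub' (fun k : ℕ => 1/(τ+k)) n
        simp only [Nat.cast_add, Nat.cast_one] at this ⊢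
        rw [← this]
        apply Finset.sum_congr rfl
        intro k _; push_cast; ring_nf
    _ ≤ 1/τ := by
        rw [Nat.cast_zero, add_zero]
        have : (0:ℝ) ≤ 1/(τ+n) := by positivity
        linarith


lemma aux_log_pos_mul (r : ℝ) (hr : 0 < r) (z : ℂ) (hz : z ≠ 0) :
    Complex.log ((r:ℂ) * z) = (Real.log r : ℂ) + Complex.log z := by
  rw [Complex.log, Complex.log, Complex.arg_real_mul z hr]
  rw [norm_mul, Complex.norm_real, Real.norm_eq_abs, _root_.abs_of_pos hr,
    Real.log_mul hr.ne' (by simpa using hz)]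
  push_cast; ring

-- step 1 : GammaSeq ratio identity
lemma aux_step1 (w c : ℂ)
    (hne : ∀ k : ℕ, w + (k:ℂ) + 1 ≠ 0) (hnec : ∀ k : ℕ, w + (k:ℂ) + 1 + c ≠ 0)
    (n : ℕ) (hn : 1 ≤ n) :
    Complex.GammaSeq (1+w+c) n / Complex.GammaSeq (1+w) n * Complex.exp (-(c * Complex.log w))
      = Complex.exp ((Real.log n : ℂ) * c
          - (∑ k ∈ Finset.range (n+1), Complex.log (1 + c/(w+(k:ℂ)+1))) - c * Complex.log w) := by
  have hn0 : (n:ℂ) ≠ 0 := Nat.cast_ne_zero.mpr (by omega)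
  have hfact : ((Nat.factorial n : ℕ) : ℂ) ≠ 0 := Nat.cast_ne_zero.mpr (Nat.factorial_ne_zero n)
  set L : ℂ := (Real.log n : ℂ) with hL
  set S : ℂ := ∑ k ∈ Finset.range (n+1), Complex.log (1 + c/(w+(k:ℂ)+1)) with hS
  have hcpow : ∀ s : ℂ, (n:ℂ) ^ s = Complex.exp (L * s) := by
    intro s
    rw [Complex.cpow_def_of_ne_zero hn0, hL]
    congr 1
    rw [Complex.ofReal_log (Nat.cast_nonneg n)]
    norm_num
  have hfac : ∀ k : ℕ, (w+(k:ℂ)+1) / (w+(k:ℂ)+1+c)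
      = Complex.exp (-(Complex.log (1 + c/(w+(k:ℂ)+1)))) := by
    intro k
    have h1 : 1 + c/(w+(k:ℂ)+1) = (w+(k:ℂ)+1+c)/(w+(k:ℂ)+1) := by
      field_simp [hne k]
    rw [Complex.exp_neg, Complex.exp_log (by rw [h1]; exact div_ne_zero (hnec k) (hne k)), h1,
      inv_div]
  set P : ℂ := ∏ j ∈ Finset.range (n+1), (1 + w + (j:ℂ)) with hP
  set Q : ℂ := ∏ j ∈ Finset.range (n+1), (1 + w + c + (j:ℂ)) with hQ
  have hPne : P ≠ 0 := Finset.prod_ne_zero_iff.mpr fun j _ => by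
    have := hne j; intro h; apply this; rw [← h]; ring
  have hQne : Q ≠ 0 := Finset.prod_ne_zero_iff.mpr fun j _ => by
    have := hnec j; intro h; apply this; rw [← h]; ring
  have hPQ : P / Q = Complex.exp (-S) := by
    rw [hP, hQ, ← Finset.prod_div_distrib]
    have hc : ∀ k ∈ Finset.range (n+1), (1+w+(k:ℂ))/(1+w+c+(k:ℂ))
        = Complex.exp (-(Complex.log (1 + c/(w+(k:ℂ)+1)))) := by
      intro k _
      rw [show (1 + w + (k:ℂ)) = w + (k:ℂ) + 1 by ring,
        show (1 + w + c + (k:ℂ)) = w + (k:ℂ) + 1 + c by ring]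
      exact hfac k
    rw [Finset.prod_congr rfl hc, ← Complex.exp_sum, hS, ← Finset.sum_neg_distrib]
  rw [Complex.GammaSeq, Complex.GammaSeq, ← hP, ← hQ, hcpow, hcpow]
  have hsplit : Complex.exp (L*(1+w+c)) = Complex.exp (L*(1+w)) * Complex.exp (L*c) := by
    rw [← Complex.exp_add]; ring_nf
  have hrhs : Complex.exp (L*c - S - c*Complex.log w)
      = Complex.exp (L*c) * (P/Q) * Complex.exp (-(c*Complex.log w)) := by
    rw [hPQ, ← Complex.exp_add, ← Complex.exp_add]; ring_nf
  rw [hrhs, hsplit]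
  have he1 : Complex.exp (L*(1+w)) ≠ 0 := Complex.exp_ne_zero _
  field_simp


lemma aux_main (δ R τ : ℝ) (hδ : 0 < δ) (hR : 0 ≤ R) (hτ : 0 < τ) (w : ℂ)
    (hwm : ∀ m : ℝ, 0 ≤ m → δ * (τ + m) ≤ ‖w + (m:ℂ)‖)
    (hws : ∀ m : ℝ, 0 ≤ m → w + (m:ℂ) ∈ Complex.slitPlane)
    (c : ℂ) (hc : ‖c‖ ≤ R) (hbig : 2*R + 2 ≤ δ * τ)
    (hB2 : R/(δ*τ) + (R+R^2)/(δ^2*τ) ≤ 1/2) :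
    ‖Complex.exp (-(c * Complex.log w)) * (Complex.Gamma (1+w+c) / Complex.Gamma (1+w)) - 1‖
      ≤ 2*(R/(δ*τ) + (R+R^2)/(δ^2*τ)) := by
  set B : ℝ := R/(δ*τ) + (R+R^2)/(δ^2*τ) with hBdef
  have hB0 : 0 ≤ B := by positivity
  -- norm lower bounds with natural number shifts
  have hwk : ∀ k : ℕ, δ*(τ+(k+1)) ≤ ‖w + (k:ℂ) + 1‖ := by
    intro k
    have := hwm (k+1) (by positivity)
    convert this using 2 <;> push_cast <;> ring
  have hwkpos : ∀ k : ℕ, (0:ℝ) < δ*(τ+(k+1)) := by intro k; positivity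
  have hne : ∀ k : ℕ, w + (k:ℂ) + 1 ≠ 0 := by
    intro k h
    have h1 := hwk k
    rw [h] at h1; simp at h1
    nlinarith [hwkpos k]
  have hRlt : ∀ k : ℕ, R < δ*(τ+(k+1)) := by
    intro k
    have : δ * τ ≤ δ * (τ + (k+1)) := by nlinarith [hwkpos k]
    nlinarith
  have hnec : ∀ k : ℕ, w + (k:ℂ) + 1 + c ≠ 0 := by
    intro k h
    have h2 : w + (k:ℂ) + 1 = -c := by linear_combination h
    have h3 := hwk k
    rw [h2, norm_neg] at h3
    nlinarith [hRlt k]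
  have hzk : ∀ k : ℕ, ‖c / (w + (k:ℂ) + 1)‖ ≤ R/(δ*(τ+(k+1))) := by
    intro k
    rw [norm_div, div_le_div_iff₀ (lt_of_lt_of_le (hwkpos k) (hwk k)) (hwkpos k)]
    calc ‖c‖ * (δ*(τ+(k+1))) ≤ R * (δ*(τ+(k+1))) :=
          mul_le_mul_of_nonneg_right hc (hwkpos k).le
      _ ≤ R * ‖w + (k:ℂ) + 1‖ := mul_le_mul_of_nonneg_left (hwk k) hR
  have hzhalf : ∀ k : ℕ, ‖c / (w + (k:ℂ) + 1)‖ ≤ 1/2 := by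
    intro k
    refine le_trans (hzk k) ?_
    rw [div_le_div_iff₀ (hwkpos k) (by norm_num)]
    have : 2*R + 2 ≤ δ*(τ+(k+1)) := le_trans hbig (by nlinarith [hwkpos k])
    nlinarith
  -- segment facts
  have hseg : ∀ (mr : ℝ), 0 ≤ mr → ∀ t : ℝ, t ∈ Set.Icc (0:ℝ) 1 →
      ((w + (mr:ℂ)) + (t:ℂ)) ∈ Complex.slitPlane ∧ δ*(τ+mr) ≤ ‖(w + (mr:ℂ)) + (t:ℂ)‖ := by
    intro mr hmr t ht
    have h1 := hws (mr + t) (by linarith [ht.1])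
    have h2 := hwm (mr + t) (by linarith [ht.1])
    have he : w + ((mr + t : ℝ):ℂ) = (w + (mr:ℂ)) + (t:ℂ) := by push_cast; ring
    rw [he] at h1 h2
    refine ⟨h1, le_trans ?_ h2⟩
    have : δ*(τ+mr) ≤ δ*(τ + (mr + t)) := by nlinarith [ht.1]
    linarith
  -- first log bound
  have hδτ : 0 < δ * τ := by positivity
  have hlog1 : ‖Complex.log (w+1) - Complex.log w‖ ≤ 1/(δ*τ) := by
    have := (aux_log_seg w (δ*τ) hδτ ?_).2
    · exact this
    · intro t ht
      have := hseg 0 le_rfl t ht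
      simpa using this
  -- the a_k terms
  set a : ℕ → ℂ := fun k => c * (Complex.log (w+(k:ℂ)+2) - Complex.log (w+(k:ℂ)+1))
      - Complex.log (1 + c/(w+(k:ℂ)+1)) with hadef
  have hak : ∀ k : ℕ, ‖a k‖ ≤ (R+R^2) * (1/(τ+(k:ℝ)+1)^2) * (1/δ^2) := by
    intro k
    set b : ℂ := w + (k:ℂ) + 1 with hb
    set m : ℝ := δ*(τ+(k+1)) with hm
    have hmpos := hwkpos k
    have hbm : m ≤ ‖b‖ := hwk k
    have hbpos : (0:ℝ) < ‖b‖ := lt_of_lt_of_le hmpos hbm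
    have hls := (aux_log_seg b m hmpos ?_).1
    swap
    · intro t ht
      have := hseg ((k:ℝ)+1) (by positivity) t ht
      have he : w + (((k:ℝ)+1 : ℝ):ℂ) = b := by rw [hb]; push_cast; ring
      rw [he] at this
      exact this
    -- hls : ‖log (b+1) - log b - b⁻¹‖ ≤ 1/(m*‖b‖)
    set z : ℂ := c / b with hz
    have hz2 : ‖z‖ ≤ 1/2 := hzhalf k
    have hz1 : ‖z‖ < 1 := lt_of_le_of_lt hz2 (by norm_num)
    have hlz := Complex.norm_log_one_add_sub_self_le hz1
    have hlz2 : ‖Complex.log (1+z) - z‖ ≤ ‖z‖^2 := by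
      have h1 : (1 - ‖z‖)⁻¹ ≤ 2 := by
        rw [inv_le_comm₀ (by linarith [norm_nonneg z, hz2]) (by norm_num)]
        linarith
      calc ‖Complex.log (1+z) - z‖ ≤ ‖z‖^2 * (1-‖z‖)⁻¹ / 2 := hlz
        _ ≤ ‖z‖^2 * 2 / 2 := by
            apply div_le_div_of_nonneg_right _ (by norm_num)
            exact mul_le_mul_of_nonneg_left h1 (by positivity)
        _ = ‖z‖^2 := by ring
    have hsplit : a k = c * (Complex.log (b+1) - Complex.log b - b⁻¹)
        + (z - Complex.log (1+z)) := by
      rw [hadef, hz, hb]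
      have : w + (k:ℂ) + 1 + 1 = w + (k:ℂ) + 2 := by ring
      rw [this, div_eq_mul_inv]
      ring
    rw [hsplit]
    have h1 : ‖c * (Complex.log (b+1) - Complex.log b - b⁻¹)‖ ≤ R * (1/(m*m)) := by
      rw [norm_mul]
      have hmm : 1/(m*‖b‖) ≤ 1/(m*m) := by
        apply div_le_div_of_nonneg_left (by norm_num) (by positivity)
        exact mul_le_mul_of_nonneg_left hbm hmpos.le
      calc ‖c‖ * ‖Complex.log (b+1) - Complex.log b - b⁻¹‖
          ≤ R * (1/(m*‖b‖)) := mul_le_mul hc hls (norm_nonneg _) hR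
        _ ≤ R * (1/(m*m)) := mul_le_mul_of_nonneg_left hmm hR
    have h2 : ‖z - Complex.log (1+z)‖ ≤ R^2 * (1/(m*m)) := by
      rw [← norm_neg, neg_sub]
      refine le_trans hlz2 ?_
      have := hzk k
      rw [← hz, ← hm] at this
      calc ‖z‖^2 ≤ (R/m)^2 := pow_le_pow_left₀ (norm_nonneg z) this 2
        _ = R^2 * (1/(m*m)) := by rw [div_pow, mul_one_div]; ring
    have hmsq : m*m = δ^2 * (τ+(k:ℝ)+1)^2 := by rw [hm]; push_cast; ring
    calc ‖c * (Complex.log (b+1) - Complex.log b - b⁻¹) + (z - Complex.log (1+z))‖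
        ≤ R * (1/(m*m)) + R^2 * (1/(m*m)) := le_trans (norm_add_le _ _) (by linarith)
      _ = (R+R^2) * (1/(τ+(k:ℝ)+1)^2) * (1/δ^2) := by
          rw [hmsq]; field_simp
  -- sum bound
  have hsum : ∀ n : ℕ, ∑ k ∈ Finset.range (n+1), ‖a k‖ ≤ (R+R^2)/(δ^2*τ) := by
    intro n
    calc ∑ k ∈ Finset.range (n+1), ‖a k‖
        ≤ ∑ k ∈ Finset.range (n+1), (R+R^2) * (1/(τ+(k:ℝ)+1)^2) * (1/δ^2) :=
          Finset.sum_le_sum (fun k _ => hak k)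
      _ = (R+R^2) * (1/δ^2) * ∑ k ∈ Finset.range (n+1), 1/(τ+(k:ℝ)+1)^2 := by
          rw [Finset.mul_sum]; apply Finset.sum_congr rfl; intro k _; ring
      _ ≤ (R+R^2) * (1/δ^2) * (1/τ) := by
          apply mul_le_mul_of_nonneg_left (aux_sum_bound τ hτ (n+1)) (by positivity)
      _ = (R+R^2)/(δ^2*τ) := by field_simp
  -- core bound
  have hcore : ∀ n : ℕ, ‖c * (Complex.log (w+1) - Complex.log w)
      + ∑ k ∈ Finset.range (n+1), a k‖ ≤ B := by
    intro n
    calc ‖c * (Complex.log (w+1) - Complex.log w) + ∑ k ∈ Finset.range (n+1), a k‖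
        ≤ ‖c‖ * ‖Complex.log (w+1) - Complex.log w‖ + ∑ k ∈ Finset.range (n+1), ‖a k‖ := by
          refine le_trans (norm_add_le _ _) ?_
          rw [norm_mul]
          exact add_le_add le_rfl (norm_sum_le _ _)
      _ ≤ R * (1/(δ*τ)) + (R+R^2)/(δ^2*τ) := by
          apply add_le_add _ (hsum n)
          exact mul_le_mul hc hlog1 (norm_nonneg _) hR
      _ = B := by rw [hBdef]; ring
  -- decomposition
  set S : ℕ → ℂ := fun n => ∑ k ∈ Finset.range (n+1), Complex.log (1 + c/(w+(k:ℂ)+1)) with hSdef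
  set E : ℕ → ℂ := fun n => (Real.log n : ℂ) * c - S n - c * Complex.log w with hEdef
  set T : ℕ → ℂ := fun n => (Real.log n : ℂ) * c - c * Complex.log (w+(n:ℂ)+2) with hTdef
  have htel : ∀ n : ℕ, ∑ k ∈ Finset.range (n+1),
      (Complex.log (w+(k:ℂ)+2) - Complex.log (w+(k:ℂ)+1))
      = Complex.log (w+(n:ℂ)+2) - Complex.log (w+1) := by
    intro n
    have h := Finset.sum_range_sub (fun k : ℕ => Complex.log (w+(k:ℂ)+1)) (n+1)
    have h0 : Complex.log (w+(n:ℂ)+2) - Complex.log (w+1)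
        = Complex.log (w+((n+1:ℕ):ℂ)+1) - Complex.log (w+((0:ℕ):ℂ)+1) := by
      push_cast; ring_nf
    rw [h0, ← h]
    apply Finset.sum_congr rfl
    intro k _
    congr 2
    push_cast; ring
  have hdecomp : ∀ n : ℕ, E n = T n + (c * (Complex.log (w+1) - Complex.log w)
      + ∑ k ∈ Finset.range (n+1), a k) := by
    intro n
    rw [hEdef, hTdef, hadef, hSdef]
    simp only
    rw [Finset.sum_sub_distrib, ← Finset.mul_sum, htel n]
    ring
  -- tail tends to zero
  have hinv : Tendsto (fun n : ℕ => ((n:ℂ))⁻¹) atTop (𝓝 0) := by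
    rw [tendsto_zero_iff_norm_tendsto_zero]
    simp only [norm_inv, Complex.norm_natCast]
    exact tendsto_inv_atTop_zero.comp tendsto_natCast_atTop_atTop
  have hlogt : Tendsto (fun n : ℕ => Complex.log (1 + (w+2) * ((n:ℂ))⁻¹)) atTop (𝓝 0) := by
    have hone : Tendsto (fun n : ℕ => 1 + (w+2) * ((n:ℂ))⁻¹) atTop (𝓝 1) := by
      have := (hinv.const_mul (w+2)).const_add 1
      simpa using this
    have hc1 : ContinuousAt Complex.log 1 := continuousAt_clog (by simp [Complex.mem_slitPlane_iff])
    have := hc1.tendsto.comp hone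
    simpa [Complex.log_one, Function.comp_def] using this
  have hT0 : Tendsto T atTop (𝓝 0) := by
    have hsmall : Tendsto (fun n : ℕ => ‖(w+2) * ((n:ℂ))⁻¹‖) atTop (𝓝 0) := by
      simpa using (hinv.const_mul (w+2)).norm
    have hevn : ∀ᶠ n : ℕ in atTop, (1:ℕ) ≤ n ∧ ‖(w+2) * ((n:ℂ))⁻¹‖ < 1 :=
      (eventually_ge_atTop 1).and (hsmall.eventually (gt_mem_nhds one_pos))
    have hev : T =ᶠ[atTop] (fun n : ℕ => -(c * Complex.log (1 + (w+2) * ((n:ℂ))⁻¹))) := by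
      filter_upwards [hevn] with n hn
      obtain ⟨hn1, hn2⟩ := hn
      have hnpos : (0:ℝ) < (n:ℝ) := by exact_mod_cast Nat.pos_of_ne_zero (by omega)
      have hncne : ((n:ℂ)) ≠ 0 := Nat.cast_ne_zero.mpr (by omega)
      have hzne : (1 + (w+2) * ((n:ℂ))⁻¹) ≠ 0 := by
        intro h
        have h2 : (w+2) * ((n:ℂ))⁻¹ = -1 := by linear_combination h
        rw [h2] at hn2; simp at hn2
      have hmul : (((n:ℝ)):ℂ) * (1 + (w+2) * ((n:ℂ))⁻¹) = w + (n:ℂ) + 2 := by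
        push_cast
        field_simp
        ring
      have hlogeq : Complex.log (w+(n:ℂ)+2)
          = ((Real.log (n:ℝ)):ℂ) + Complex.log (1 + (w+2)*((n:ℂ))⁻¹) := by
        rw [← hmul, aux_log_pos_mul (n:ℝ) hnpos _ hzne]
      rw [hTdef]
      simp only
      rw [hlogeq]
      ring
    refine Tendsto.congr' hev.symm ?_
    have := (hlogt.const_mul c).neg
    simpa using this
  -- Gamma nonvanishing and limit
  have hΓne : Complex.Gamma (1+w) ≠ 0 := by
    apply Complex.Gamma_ne_zero
    intro mm h
    exact hne mm (by push_cast; linear_combination h)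
  set G : ℂ := Complex.exp (-(c * Complex.log w))
      * (Complex.Gamma (1+w+c) / Complex.Gamma (1+w)) with hG
  have hGt : Tendsto (fun n => Complex.exp (E n)) atTop (𝓝 G) := by
    have h1 := ((Complex.GammaSeq_tendsto_Gamma (1+w+c)).div
      (Complex.GammaSeq_tendsto_Gamma (1+w)) hΓne).mul_const
      (Complex.exp (-(c * Complex.log w)))
    have heq : (fun n : ℕ => Complex.GammaSeq (1+w+c) n / Complex.GammaSeq (1+w) n
        * Complex.exp (-(c * Complex.log w))) =ᶠ[atTop] (fun n => Complex.exp (E n)) := by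
      filter_upwards [eventually_ge_atTop 1] with n hn
      rw [aux_step1 w c hne hnec n hn, hEdef]
    refine Tendsto.congr' heq ?_
    have hGc : G = Complex.Gamma (1+w+c) / Complex.Gamma (1+w)
        * Complex.exp (-(c * Complex.log w)) := by rw [hG]; ring
    rw [hGc]
    exact h1
  -- conclusion
  have hTn := (hT0.norm.const_add B).const_mul 2
  have hLHS : Tendsto (fun n => ‖Complex.exp (E n) - 1‖) atTop (𝓝 ‖G - 1‖) :=
    (hGt.sub_const 1).norm
  have hevb : ∀ᶠ n : ℕ in atTop, ‖Complex.exp (E n) - 1‖ ≤ 2*(B + ‖T n‖) := by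
    have h12 : ∀ᶠ n : ℕ in atTop, ‖T n‖ < 1/2 :=
      hT0.norm.eventually (gt_mem_nhds (by norm_num))
    filter_upwards [h12] with n hn
    have hEn : ‖E n‖ ≤ B + ‖T n‖ := by
      rw [hdecomp n]
      calc ‖T n + (c * (Complex.log (w+1) - Complex.log w)
            + ∑ k ∈ Finset.range (n+1), a k)‖
          ≤ ‖T n‖ + ‖c * (Complex.log (w+1) - Complex.log w)
            + ∑ k ∈ Finset.range (n+1), a k‖ := norm_add_le _ _
        _ ≤ B + ‖T n‖ := by linarith [hcore n]
    have hE1 : ‖E n‖ ≤ 1 := by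
      have hTh : ‖T n‖ ≤ 1/2 := le_of_lt hn
      calc ‖E n‖ ≤ B + ‖T n‖ := hEn
        _ ≤ 1/2 + 1/2 := add_le_add hB2 hTh
        _ = 1 := by norm_num
    have h2 := Complex.norm_exp_sub_one_le hE1
    calc ‖Complex.exp (E n) - 1‖ ≤ 2 * ‖E n‖ := h2
      _ ≤ 2*(B + ‖T n‖) := by linarith
  have hfin := le_of_tendsto_of_tendsto hLHS hTn hevb
  simpa [hG] using hfin


theorem character_confluence_minus (x : ℂ) (hx : -x ∈ Complex.slitPlane) (r : ℝ) :
    TendstoUniformlyOn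
      (fun (h : ℝ) (c : ℂ) =>
        (h : ℂ) ^ c * Complex.Gamma (1 + c - x / h) / Complex.Gamma (1 - x / h))
      (fun c : ℂ => (-x) ^ c)
      (nhdsWithin (0 : ℝ) (Set.Ioi 0))
      (Metric.closedBall (0 : ℂ) r) := by
  set u : ℂ := -x with hu
  have hu0 : u ≠ 0 := Complex.slitPlane_ne_zero hx
  have hX : 0 < ‖u‖ := norm_pos_iff.mpr hu0
  set X : ℝ := ‖u‖ with hXD
  obtain ⟨δ, hδ, hδ1, hlow⟩ := aux_lower u hx
  set R : ℝ := max r 0 with hRdef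
  have hR : 0 ≤ R := le_max_right r 0
  set M : ℝ := Real.exp (R * ‖Complex.log u‖) with hM
  have hM0 : 0 < M := Real.exp_pos _
  set K : ℝ := R/δ + (R+R^2)/δ^2 with hK
  have hK0 : 0 ≤ K := by positivity
  clear_value R M K
  rw [Metric.tendstoUniformlyOn_iff]
  intro ε hε
  set h₀ : ℝ := min (δ*X/(2*R+2)) (min (X/(2*K+1)) (X*ε/(2*M*K+1))) with hh₀
  have hh₀pos : 0 < h₀ := by
    rw [hh₀]
    apply lt_min (by positivity) (lt_min (by positivity) (by positivity))
  clear_value h₀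
  filter_upwards [Ioo_mem_nhdsGT_of_mem (Set.mem_Ico.mpr ⟨le_refl (0:ℝ), hh₀pos⟩)]
    with h hh
  obtain ⟨hhpos, hhlt⟩ := hh
  intro c hc
  have hcR : ‖c‖ ≤ R := by
    rw [Metric.mem_closedBall, dist_zero_right] at hc
    rw [hRdef]
    exact le_trans hc (le_max_left r 0)
  -- set up w and τ
  set w : ℂ := ((h⁻¹ : ℝ) : ℂ) * u with hw
  set τ : ℝ := h⁻¹ * X with hτD
  have hτ : 0 < τ := by positivity
  have hwm : ∀ m : ℝ, 0 ≤ m → δ * (τ + m) ≤ ‖w + (m:ℂ)‖ := by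
    intro m hm
    have := hlow h⁻¹ (by positivity) m hm
    rw [hτD, hw]
    exact this
  have hws : ∀ m : ℝ, 0 ≤ m → w + (m:ℂ) ∈ Complex.slitPlane := by
    intro m hm
    rcases hx with h1 | h1
    · left
      have : (w + (m:ℂ)).re = h⁻¹ * u.re + m := by
        rw [hw]; simp
      rw [this]
      have h2 : 0 < h⁻¹ * u.re := mul_pos (by positivity) h1
      linarith
    · right
      have he : (w + (m:ℂ)).im = h⁻¹ * u.im := by rw [hw]; simp
      rw [he]
      exact mul_ne_zero (inv_ne_zero hhpos.ne') h1
  -- size conditions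
  have hδτ : δ * τ = δ * X / h := by rw [hτD]; field_simp
  have hbig : 2*R + 2 ≤ δ * τ := by
    have h1 : h < δ*X/(2*R+2) := lt_of_lt_of_le hhlt (hh₀ ▸ min_le_left _ _)
    have hpos : (0:ℝ) < 2*R+2 := by positivity
    rw [lt_div_iff₀ hpos] at h1
    rw [hδτ, le_div_iff₀ hhpos]
    nlinarith
  set B : ℝ := R/(δ*τ) + (R+R^2)/(δ^2*τ) with hBdef
  clear_value B
  have hBK : B = K * h / X := by
    rw [hBdef, hK, hτD]; field_simp
  have hB2 : B ≤ 1/2 := by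
    have h2 : h < X/(2*K+1) := lt_of_lt_of_le hhlt (hh₀ ▸ le_trans (min_le_right _ _) (min_le_left _ _))
    rw [lt_div_iff₀ (by positivity)] at h2
    rw [hBK, div_le_iff₀ hX]
    nlinarith
  have hmain := aux_main δ R τ hδ hR hτ w hwm hws c hcR hbig (hBdef ▸ hB2)
  rw [← hBdef] at hmain
  set Q : ℂ := Complex.exp (-(c * Complex.log w))
      * (Complex.Gamma (1+w+c) / Complex.Gamma (1+w)) with hQ
  -- identities
  have hhC : (h:ℂ) ≠ 0 := by exact_mod_cast hhpos.ne'
  have hwx1 : 1 + c - x/(h:ℂ) = 1 + w + c := by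
    rw [hw, hu]; push_cast; field_simp; ring
  have hwx2 : 1 - x/(h:ℂ) = 1 + w := by
    rw [hw, hu]; push_cast; field_simp; ring
  have hlogw : Complex.log w = ((Real.log h⁻¹ : ℝ) : ℂ) + Complex.log u := by
    rw [hw]; exact aux_log_pos_mul h⁻¹ (by positivity) u hu0
  have hpow : (h:ℂ)^c = u^c * Complex.exp (-(c * Complex.log w)) := by
    rw [Complex.cpow_def_of_ne_zero hhC, Complex.cpow_def_of_ne_zero hu0,
      ← Complex.exp_add, hlogw]
    congr 1
    rw [show Complex.log (h:ℂ) = ((Real.log h : ℝ) : ℂ) from (Complex.ofReal_log hhpos.le).symm,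
      Real.log_inv]
    push_cast
    ring
  have hfn : (h:ℂ)^c * Complex.Gamma (1+c-x/(h:ℂ)) / Complex.Gamma (1-x/(h:ℂ)) = u^c * Q := by
    rw [hwx1, hwx2, hpow, hQ]; ring
  rw [dist_eq_norm, hfn]
  have hnu : ‖u^c‖ ≤ M := by
    rw [Complex.cpow_def_of_ne_zero hu0, Complex.norm_exp, hM]
    apply Real.exp_le_exp.mpr
    calc (Complex.log u * c).re ≤ ‖Complex.log u * c‖ := by
          exact Complex.re_le_norm _
      _ = ‖Complex.log u‖ * ‖c‖ := norm_mul _ _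
      _ ≤ ‖Complex.log u‖ * R := mul_le_mul_of_nonneg_left hcR (norm_nonneg _)
      _ = R * ‖Complex.log u‖ := mul_comm _ _
  have hsplit : u^c - u^c * Q = u^c * (1 - Q) := by ring
  rw [hsplit, norm_mul]
  have h1Q : ‖(1:ℂ) - Q‖ ≤ 2*B := by rw [norm_sub_rev]; exact hmain
  have hfinal : ‖u^c‖ * ‖(1:ℂ) - Q‖ ≤ M * (2*B) := by
    apply mul_le_mul hnu h1Q (norm_nonneg _) hM0.le
  refine lt_of_le_of_lt hfinal ?_
  have h3 : h < X*ε/(2*M*K+1) :=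
    lt_of_lt_of_le hhlt (hh₀ ▸ le_trans (min_le_right _ _) (min_le_right _ _))
  rw [lt_div_iff₀ (by positivity)] at h3
  rw [hBK]
  rw [show M * (2*(K*h/X)) = 2*M*K*h/X by ring, div_lt_iff₀ hX]
  nlinarith

end aux
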